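/- Let H₃(z) = z³ − 42z² + 420z − 840 and let P(z) = (5/3)z⁶ − (416/3)z⁵ + (12628/3)z⁴ − 57792z³ + 364560z² − 940800z + 705600. Then ∫₀^∞ P(z)·H₃(z)·z^{1/2}·e^{-z/4} dz = 39360 · ∫₀^∞ H₃(z)²·z^{1/2}·e^{-z/4} dz. In other words, the coefficient of H₃ in the orthogonal expansion of P with respect to the weight z^{1/2}e^{-z/4} on (0,∞) equals B₃ = 39360. -/

import Mathlib

open MeasureTheory Set Real Finset

lemma intf (k : ℕ) : IntegrableOn (fun z : ℝ => z ^ ((k:ℝ) + 1/2) * Real.exp (-z/4)) (Set.Ioi 0) := by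
  have h := integrableOn_rpow_mul_exp_neg_mul_rpow (s := (k:ℝ)+1/2) (p := 1) (b := 1/4)
    (by have := Nat.cast_nonneg (α := ℝ) k; linarith) (by norm_num) (by norm_num)
  refine h.congr_fun (fun x hx => ?_) measurableSet_Ioi
  dsimp only; rw [Real.rpow_one]; ring_nf

lemma If (k : ℕ) : ∫ z in Set.Ioi (0:ℝ), z ^ ((k:ℝ) + 1/2) * Real.exp (-z/4)
    = (4:ℝ) ^ ((k:ℝ)+3/2) * Real.Gamma ((k:ℝ)+3/2) := by
  have h := Real.integral_rpow_mul_exp_neg_mul_Ioi (a := (k:ℝ)+3/2) (r := 1/4)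
    (by have := Nat.cast_nonneg (α := ℝ) k; linarith) (by norm_num)
  rw [show ((k:ℝ)+3/2-1) = (k:ℝ)+1/2 by ring, show ((1:ℝ)/(1/4)) = 4 by norm_num] at h
  rw [← h]
  exact setIntegral_congr_fun measurableSet_Ioi (fun x hx => by ring_nf)

lemma key (c : ℕ → ℝ) :
    ∫ z in Set.Ioi (0:ℝ), (∑ k ∈ Finset.range 10, c k * (z ^ ((k:ℝ)+1/2) * Real.exp (-z/4)))
    = ∑ k ∈ Finset.range 10, c k * ((4:ℝ) ^ ((k:ℝ)+3/2) * Real.Gamma ((k:ℝ)+3/2)) := by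
  rw [integral_finset_sum _ (fun k _ => ((intf k).const_mul _))]
  exact Finset.sum_congr rfl (fun k _ => by rw [integral_const_mul, If k])

lemma pow4 (k : ℕ) : (4:ℝ) ^ ((k:ℝ)+3/2) = 8 * 4 ^ k := by
  rw [Real.rpow_add (by norm_num), Real.rpow_natCast]
  have h2 : (4:ℝ) ^ ((3:ℝ)/2) = 8 := by
    rw [show ((3:ℝ)/2) = ((3:ℕ):ℝ) * (1/2) by norm_num, Real.rpow_mul (by norm_num),
      Real.rpow_natCast, ← Real.sqrt_eq_rpow, show ((4:ℝ)^(3:ℕ)) = 8^2 by norm_num,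
      Real.sqrt_sq (by norm_num)]
  rw [h2]; ring

/-- The coefficient of `H₃` in the orthogonal expansion of the nonlinear interaction
polynomial `P` with respect to the weight `z^{1/2} e^{-z/4}` on `(0,∞)` equals
`B₃ = 39360`. -/
theorem projection_constant_B3
    (H₃ P : ℝ → ℝ)
    (hH : ∀ z : ℝ, H₃ z = z ^ 3 - 42 * z ^ 2 + 420 * z - 840)
    (hP : ∀ z : ℝ, P z = 5 / 3 * z ^ 6 - 416 / 3 * z ^ 5 + 12628 / 3 * z ^ 4
      - 57792 * z ^ 3 + 364560 * z ^ 2 - 940800 * z + 705600) :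
    ∫ z in Set.Ioi (0 : ℝ), P z * H₃ z * z ^ ((1 : ℝ) / 2) * Real.exp (-z / 4)
      = 39360 * ∫ z in Set.Ioi (0 : ℝ), H₃ z ^ 2 * z ^ ((1 : ℝ) / 2) * Real.exp (-z / 4) := by
  set cP : ℕ → ℝ := fun k =>
    (([-592704000, 1086624000, -731001600, 241879680, -44060800, 4676224, -294224,
      32200/3, -626/3, 5/3] : List ℝ).getD k 0) with hcP
  set cH : ℕ → ℝ := fun k =>
    (([705600, -705600, 246960, -36960, 2604, -84, 1, 0, 0, 0] : List ℝ).getD k 0) with hcH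
  have e : ∀ z : ℝ, z ∈ Set.Ioi (0:ℝ) → ∀ k : ℕ,
      z ^ ((k:ℝ)+1/2) = z ^ k * z ^ ((1:ℝ)/2) := fun z hz k => by
    rw [Real.rpow_add (mem_Ioi.mp hz), Real.rpow_natCast]
  have h1 : (∫ z in Set.Ioi (0 : ℝ), P z * H₃ z * z ^ ((1 : ℝ) / 2) * Real.exp (-z / 4))
      = ∫ z in Set.Ioi (0:ℝ),
        (∑ k ∈ Finset.range 10, cP k * (z ^ ((k:ℝ)+1/2) * Real.exp (-z/4))) := by
    refine setIntegral_congr_fun measurableSet_Ioi (fun z hz => ?_)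
    simp only [Finset.sum_range_succ, Finset.sum_range_zero, hcP, List.getD_cons_zero, List.getD_cons_succ, hH, hP,
      e z hz 0, e z hz 1, e z hz 2, e z hz 3, e z hz 4, e z hz 5, e z hz 6, e z hz 7,
      e z hz 8, e z hz 9]
    ring
  have h2 : (∫ z in Set.Ioi (0 : ℝ), H₃ z ^ 2 * z ^ ((1 : ℝ) / 2) * Real.exp (-z / 4))
      = ∫ z in Set.Ioi (0:ℝ),
        (∑ k ∈ Finset.range 10, cH k * (z ^ ((k:ℝ)+1/2) * Real.exp (-z/4))) := by
    refine setIntegral_congr_fun measurableSet_Ioi (fun z hz => ?_)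
    simp only [Finset.sum_range_succ, Finset.sum_range_zero, hcH, List.getD_cons_zero, List.getD_cons_succ, hH,
      e z hz 0, e z hz 1, e z hz 2, e z hz 3, e z hz 4, e z hz 5, e z hz 6, e z hz 7,
      e z hz 8, e z hz 9]
    ring
  rw [h1, h2, key, key]
  -- Gamma values
  have g0 : Real.Gamma (1/2 : ℝ) = Real.sqrt π := Real.Gamma_one_half_eq
  have step : ∀ x : ℝ, 0 < x → Real.Gamma (x + 1) = x * Real.Gamma x :=
    fun x hx => Real.Gamma_add_one (ne_of_gt hx)
  have g1 : Real.Gamma (3/2 : ℝ) = 1/2 * Real.sqrt π := by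
    rw [show (3/2:ℝ) = 1/2 + 1 by norm_num, step _ (by norm_num), g0]
  have g2 : Real.Gamma (5/2 : ℝ) = 3/4 * Real.sqrt π := by
    rw [show (5/2:ℝ) = 3/2 + 1 by norm_num, step _ (by norm_num), g1]; ring
  have g3 : Real.Gamma (7/2 : ℝ) = 15/8 * Real.sqrt π := by
    rw [show (7/2:ℝ) = 5/2 + 1 by norm_num, step _ (by norm_num), g2]; ring
  have g4 : Real.Gamma (9/2 : ℝ) = 105/16 * Real.sqrt π := by
    rw [show (9/2:ℝ) = 7/2 + 1 by norm_num, step _ (by norm_num), g3]; ring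
  have g5 : Real.Gamma (11/2 : ℝ) = 945/32 * Real.sqrt π := by
    rw [show (11/2:ℝ) = 9/2 + 1 by norm_num, step _ (by norm_num), g4]; ring
  have g6 : Real.Gamma (13/2 : ℝ) = 10395/64 * Real.sqrt π := by
    rw [show (13/2:ℝ) = 11/2 + 1 by norm_num, step _ (by norm_num), g5]; ring
  have g7 : Real.Gamma (15/2 : ℝ) = 135135/128 * Real.sqrt π := by
    rw [show (15/2:ℝ) = 13/2 + 1 by norm_num, step _ (by norm_num), g6]; ring
  have g8 : Real.Gamma (17/2 : ℝ) = 2027025/256 * Real.sqrt π := by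
    rw [show (17/2:ℝ) = 15/2 + 1 by norm_num, step _ (by norm_num), g7]; ring
  have g9 : Real.Gamma (19/2 : ℝ) = 34459425/512 * Real.sqrt π := by
    rw [show (19/2:ℝ) = 17/2 + 1 by norm_num, step _ (by norm_num), g8]; ring
  have g10 : Real.Gamma (21/2 : ℝ) = 654729075/1024 * Real.sqrt π := by
    rw [show (21/2:ℝ) = 19/2 + 1 by norm_num, step _ (by norm_num), g9]; ring
  simp only [Finset.sum_range_succ, Finset.sum_range_zero, hcP, hcH, List.getD_cons_zero, List.getD_cons_succ,
    pow4]
  push_cast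
  norm_num [g1, g2, g3, g4, g5, g6, g7, g8, g9, g10]
  ring
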